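/- Dyadic decomposition identity: for a 2-simplex S = [p₀p₁p₂] with edge midpoints q₀=(p₁+p₂)/2, q₁=(p₀+p₂)/2, q₂=(p₀+p₁)/2, the dyadic decomposition dya(S) := [q₀q₁q₂] + [q₁q₀p₂] + [q₂p₁q₀] + [p₀q₂q₁] satisfies ⟨dya(S), ω⟩ = ⟨S, ω⟩ for every closed and nonatomic 2-germ ω. -/
import Mathlib


/-- The euclidean space `ℝ^d` in which simplices live. -/
abbrev Pt (d : ℕ) := EuclideanSpace ℝ (Fin d)

/-- The coboundary of a germ, dual to the alternating-sum boundary operator. -/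
noncomputable def cobdry {d n : ℕ} (ω : (Fin n → Pt d) → ℝ) :
    (Fin (n + 1) → Pt d) → ℝ :=
  fun T => ∑ i : Fin (n + 1), (-1 : ℝ) ^ (i : ℕ) * ω (T ∘ i.succAbove)

/-- Dyadic decomposition identity: for a `2`-simplex `[p₀p₁p₂]` in a convex set
`D`, with edge midpoints `q₀ = (p₁+p₂)/2`, `q₁ = (p₀+p₂)/2`, `q₂ = (p₀+p₁)/2`,
every closed and nonatomic `2`-germ `ω` on `D` satisfies
`⟨[q₀q₁q₂] + [q₁q₀p₂] + [q₂p₁q₀] + [p₀q₂q₁], ω⟩ = ⟨[p₀p₁p₂], ω⟩`. -/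
lemma cob4 {d : ℕ} (ω : (Fin 3 → Pt d) → ℝ) (a b c e : Pt d) :
    cobdry ω ![a,b,c,e] = ω ![b,c,e] - ω ![a,c,e] + ω ![a,b,e] - ω ![a,b,c] := by
  have h0 : ![a,b,c,e] ∘ (0:Fin 4).succAbove = ![b,c,e] := by funext i; fin_cases i <;> rfl
  have h1 : ![a,b,c,e] ∘ (1:Fin 4).succAbove = ![a,c,e] := by funext i; fin_cases i <;> rfl
  have h2 : ![a,b,c,e] ∘ (2:Fin 4).succAbove = ![a,b,e] := by funext i; fin_cases i <;> rfl
  have h3 : ![a,b,c,e] ∘ (3:Fin 4).succAbove = ![a,b,c] := by funext i; fin_cases i <;> rfl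
  simp only [cobdry]
  rw [Fin.sum_univ_four, h0, h1, h2, h3]
  have : ((3:Fin 4):ℕ) = 3 := rfl
  rw [this]; norm_num; ring

lemma rng3 {d : ℕ} (a b c : Pt d) : Set.range ![a,b,c] = {a,b,c} := by
  ext x; simp [Matrix.range_cons, Matrix.range_empty]; tauto

lemma collinear_mid {d : ℕ} (a b : Pt d) :
    Collinear ℝ ({a, b, (2⁻¹:ℝ)•(a+b)} : Set (Pt d)) := by
  have hm : (2⁻¹:ℝ) • (a+b) = midpoint ℝ a b := by rw [midpoint_eq_smul_add]; norm_num
  have h : midpoint ℝ a b ∈ line[ℝ, a, b] := by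
    rw [← lineMap_inv_two]; exact AffineMap.lineMap_mem_affineSpan_pair _ _ _
  have hs : ({a, b, (2⁻¹:ℝ)•(a+b)} : Set (Pt d)) = insert (midpoint ℝ a b) {a, b} := by
    rw [hm]; ext x; simp; tauto
  rw [hs]
  exact collinear_insert_of_mem_affineSpan_pair h


theorem dyadic_decomposition {d : ℕ} (D : Set (Pt d)) (hD : Convex ℝ D)
    (ω : (Fin 3 → Pt d) → ℝ)
    (hclosed : ∀ T : Fin 4 → Pt d, (∀ i, T i ∈ D) → cobdry ω T = 0)
    (hna : ∀ S : Fin 3 → Pt d, (∀ i, S i ∈ D) → Collinear ℝ (Set.range S) → ω S = 0)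
    (p₀ p₁ p₂ : Pt d) (hp₀ : p₀ ∈ D) (hp₁ : p₁ ∈ D) (hp₂ : p₂ ∈ D)
    (q₀ q₁ q₂ : Pt d)
    (hq₀ : q₀ = (2⁻¹ : ℝ) • (p₁ + p₂)) (hq₁ : q₁ = (2⁻¹ : ℝ) • (p₀ + p₂))
    (hq₂ : q₂ = (2⁻¹ : ℝ) • (p₀ + p₁)) :
    ω ![q₀, q₁, q₂] + ω ![q₁, q₀, p₂] + ω ![q₂, p₁, q₀] + ω ![p₀, q₂, q₁]
      = ω ![p₀, p₁, p₂] := by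
  have hq₀D : q₀ ∈ D := by
    rw [hq₀, smul_add]; exact hD hp₁ hp₂ (by norm_num) (by norm_num) (by norm_num)
  have hq₁D : q₁ ∈ D := by
    rw [hq₁, smul_add]; exact hD hp₀ hp₂ (by norm_num) (by norm_num) (by norm_num)
  have hq₂D : q₂ ∈ D := by
    rw [hq₂, smul_add]; exact hD hp₀ hp₁ (by norm_num) (by norm_num) (by norm_num)
  -- closedness in explicit form
  have key : ∀ a b c e : Pt d, a ∈ D → b ∈ D → c ∈ D → e ∈ D →
      ω ![b,c,e] - ω ![a,c,e] + ω ![a,b,e] - ω ![a,b,c] = 0 := by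
    intro a b c e ha hb hc he
    rw [← cob4]
    exact hclosed _ (by intro i; fin_cases i <;> simpa)
  -- nonatomicity in explicit form
  have na : ∀ a b c : Pt d, a ∈ D → b ∈ D → c ∈ D →
      Collinear ℝ ({a,b,c} : Set (Pt d)) → ω ![a,b,c] = 0 := by
    intro a b c ha hb hc h
    exact hna _ (by intro i; fin_cases i <;> simpa) (by rw [rng3]; exact h)
  -- degenerate triples vanish
  have deg1 : ∀ a b : Pt d, a ∈ D → b ∈ D → ω ![a,a,b] = 0 := by
    intro a b ha hb
    refine na a a b ha ha hb ?_
    simp; exact collinear_pair ℝ a b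
  have deg2 : ∀ a b : Pt d, a ∈ D → b ∈ D → ω ![a,b,a] = 0 := by
    intro a b ha hb
    refine na a b a ha hb ha ?_
    have : ({a,b,a} : Set (Pt d)) = {a, b} := by ext x; simp; tauto
    rw [this]; exact collinear_pair ℝ a b
  have deg3 : ∀ a b : Pt d, a ∈ D → b ∈ D → ω ![a,b,b] = 0 := by
    intro a b ha hb
    refine na a b b ha hb hb ?_
    have : ({a,b,b} : Set (Pt d)) = {a, b} := by ext x; simp
    rw [this]; exact collinear_pair ℝ a b
  -- antisymmetry
  have sw12 : ∀ a b c : Pt d, a ∈ D → b ∈ D → c ∈ D →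
      ω ![b,a,c] = -ω ![a,b,c] := by
    intro a b c ha hb hc
    have := key a b a c ha hb ha hc
    have d1 := deg1 a c ha hc
    have d2 := deg2 a b ha hb
    linarith
  have sw23 : ∀ a b c : Pt d, a ∈ D → b ∈ D → c ∈ D →
      ω ![a,c,b] = -ω ![a,b,c] := by
    intro a b c ha hb hc
    have := key a b c b ha hb hc hb
    have d1 := deg2 b c hb hc
    have d2 := deg3 a b ha hb
    linarith
  -- midpoint collinearity facts
  have c0 : ω ![p₁,p₂,q₀] = 0 := by
    refine na _ _ _ hp₁ hp₂ hq₀D ?_; rw [hq₀]; exact collinear_mid p₁ p₂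
  have c1 : ω ![p₀,p₂,q₁] = 0 := by
    refine na _ _ _ hp₀ hp₂ hq₁D ?_; rw [hq₁]; exact collinear_mid p₀ p₂
  have c2 : ω ![p₀,p₁,q₂] = 0 := by
    refine na _ _ _ hp₀ hp₁ hq₂D ?_; rw [hq₂]; exact collinear_mid p₀ p₁
  -- four tetrahedra
  have T1 := key p₀ p₁ p₂ q₀ hp₀ hp₁ hp₂ hq₀D
  have T2 := key p₀ p₁ q₀ q₂ hp₀ hp₁ hq₀D hq₂D
  have T3 := key p₀ p₂ q₀ q₁ hp₀ hp₂ hq₀D hq₁D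
  have T4 := key p₀ q₀ q₁ q₂ hp₀ hq₀D hq₁D hq₂D
  -- reorientations of the four goal terms
  have r1 : ω ![q₂,p₁,q₀] = ω ![p₁,q₀,q₂] := by
    rw [sw12 p₁ q₂ q₀ hp₁ hq₂D hq₀D, sw23 p₁ q₂ q₀ hp₁ hq₂D hq₀D]
  have r2 : ω ![q₁,q₀,p₂] = -ω ![p₂,q₀,q₁] := by
    rw [sw12 q₀ q₁ p₂ hq₀D hq₁D hp₂, sw23 q₀ p₂ q₁ hq₀D hp₂ hq₁D,
      sw12 p₂ q₀ q₁ hp₂ hq₀D hq₁D]; ring_nf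
  have r3 : ω ![p₀,q₂,q₁] = -ω ![p₀,q₁,q₂] := sw23 p₀ q₁ q₂ hp₀ hq₁D hq₂D
  linarith
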